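/- Replacing a loop by a pendant edge preserves the reinforced walk law: let G' be obtained from G by replacing each loop e at v(e) by a new edge g(e) = {v(e), v'(e)} to a new degree-one vertex, with the same initial weight. Map each admissible path π in G to π' in G' by replacing each loop traversal by a back-and-forth traversal of g(e). Then P_{v₀,a}(Z_n = π) = P'_{v₀,b}(Z_{n'} = π') for the corresponding reinforced walks, where b assigns a_e to g(e) and a_{e'} to remaining edges. -/

import Mathlib

set_option linter.unusedSectionVars false
set_option maxHeartbeats 1000000


open Finset

namespace Rev15

variable {V : Type*} [Fintype V] [DecidableEq V]

/-- Edge-reinforced random walk path probability along a list of vertices, with current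
edge weights `w`: each step traverses an incident edge with probability proportional to
its current weight; traversed non-loop edges are reinforced by `1`, loops by `2`. -/
noncomputable def errwList {W : Type*} [Fintype W] [DecidableEq W]
    (E : Finset (Sym2 W)) (w : Sym2 W → ℝ) : List W → ℝ
  | [] => 1
  | [_] => 1
  | u :: v :: rest =>
      (w s(u, v) / ∑ e ∈ E.filter (fun e => u ∈ e), w e) *
        errwList E
          (fun e => if e = s(u, v) then w e + (if e.IsDiag then 2 else 1) else w e)
          (v :: rest)

/-- The image path `π'` in `G'`: every traversal of a loop at `u` (a step `u → u`) is
replaced by a back-and-forth traversal of the pendant edge `{inl u, inr u}`. -/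
def liftPath : List V → List (V ⊕ V)
  | [] => []
  | [v] => [Sum.inl v]
  | u :: v :: rest =>
      if u = v then Sum.inl u :: Sum.inr u :: liftPath (v :: rest)
      else Sum.inl u :: liftPath (v :: rest)

/-- The edge set of `G'`: each loop `{v}` of `G` is replaced by a pendant edge
`{inl v, inr v}` to a new degree-one vertex `inr v`; other edges are kept. -/
def liftEdges (E : Finset (Sym2 V)) : Finset (Sym2 (V ⊕ V)) :=
  (E.filter (fun e => ¬ e.IsDiag)).image (Sym2.map Sum.inl) ∪
    (Finset.univ.filter (fun v : V => s(v, v) ∈ E)).image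
      (fun v => s(Sum.inl v, Sum.inr v))

/-- The initial weights `b` on `G'`: the pendant edge `g(e)` gets the weight of the loop
`e`, all remaining edges keep their weights. -/
noncomputable def liftWeight (a : Sym2 V → ℝ) : Sym2 (V ⊕ V) → ℝ :=
  Sym2.lift ⟨fun u w =>
    match u, w with
    | Sum.inl u, Sum.inl w => a s(u, w)
    | Sum.inl _, Sum.inr w => a s(w, w)
    | Sum.inr u, Sum.inl _ => a s(u, u)
    | Sum.inr _, Sum.inr _ => 0,
    by intro u w; cases u <;> cases w <;> simp [Sym2.eq_swap]⟩

def f2 : Sym2 V → Sym2 (V ⊕ V) :=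
  Sym2.lift ⟨fun x y => if x = y then s(Sum.inl x, Sum.inr x) else s(Sum.inl x, Sum.inl y),
    by
      intro x y
      by_cases h : x = y
      · subst h; simp
      · simp only [h, Ne.symm h, if_false]
        exact Sym2.eq_swap⟩

@[simp] lemma f2_diag (v : V) : f2 s(v, v) = s(Sum.inl v, Sum.inr v) := by simp [f2]

lemma f2_nondiag {x y : V} (h : x ≠ y) : f2 s(x, y) = s(Sum.inl x, Sum.inl y) := by
  simp [f2, h]

lemma liftWeight_f2 (w : Sym2 V → ℝ) (e : Sym2 V) : liftWeight w (f2 e) = w e := by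
  induction e using Sym2.inductionOn with
  | hf x y =>
    by_cases h : x = y
    · subst h; simp [liftWeight]
    · simp [f2_nondiag h, liftWeight]

lemma f2_inj : Function.Injective (f2 : Sym2 V → Sym2 (V ⊕ V)) := by
  intro e₁ e₂ h
  induction e₁ using Sym2.inductionOn with
  | hf x y =>
    induction e₂ using Sym2.inductionOn with
    | hf x' y' =>
      by_cases h1 : x = y <;> by_cases h2 : x' = y' <;>
        simp_all [f2_nondiag, Sym2.eq_iff]

lemma inl_mem_f2 (u : V) (e : Sym2 V) : Sum.inl u ∈ f2 e ↔ u ∈ e := by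
  induction e using Sym2.inductionOn with
  | hf x y =>
    by_cases h : x = y
    · subst h; simp
    · simp [f2_nondiag h]

lemma inr_mem_f2 (u : V) (e : Sym2 V) : Sum.inr u ∈ f2 e ↔ e = s(u, u) := by
  induction e using Sym2.inductionOn with
  | hf x y =>
    by_cases h : x = y
    · subst h; simp [Sym2.eq_iff]; tauto
    · simp only [f2_nondiag h, Sym2.mem_iff, Sym2.eq_iff]
      constructor
      · rintro (h1 | h1) <;> simp_all
      · rintro (⟨rfl, rfl⟩ | ⟨rfl, rfl⟩) <;> simp_all

lemma liftEdges_eq (E : Finset (Sym2 V)) : liftEdges E = E.image f2 := by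
  ext e'
  simp only [liftEdges, mem_union, mem_image, mem_filter, Finset.mem_univ, true_and]
  constructor
  · rintro (⟨e, ⟨he, hd⟩, rfl⟩ | ⟨v, hv, rfl⟩)
    · refine ⟨e, he, ?_⟩
      induction e using Sym2.inductionOn with
      | hf x y =>
        have : x ≠ y := by simpa using hd
        simp [f2_nondiag this, Sym2.map_pair_eq]
    · exact ⟨s(v, v), hv, by simp⟩
  · rintro ⟨e, he, rfl⟩
    induction e using Sym2.inductionOn with
    | hf x y =>
      by_cases h : x = y
      · subst h; exact Or.inr ⟨x, he, by simp⟩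
      · exact Or.inl ⟨s(x, y), ⟨he, by simp [h]⟩, by simp [f2_nondiag h, Sym2.map_pair_eq]⟩

lemma filter_lift (E : Finset (Sym2 V)) (P : Sym2 (V ⊕ V) → Prop) [DecidablePred P] :
    (liftEdges E).filter P = (E.filter (fun e => P (f2 e))).image f2 := by
  rw [liftEdges_eq, Finset.filter_image]

lemma sum_filter_inl (E : Finset (Sym2 V)) (w' : Sym2 (V ⊕ V) → ℝ) (u : V) :
    ∑ e ∈ (liftEdges E).filter (fun e => Sum.inl u ∈ e), w' e
      = ∑ e ∈ E.filter (fun e => u ∈ e), w' (f2 e) := by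
  rw [filter_lift, Finset.sum_image (fun a _ b _ h => f2_inj h)]
  exact Finset.sum_congr (by simp [inl_mem_f2]) (fun _ _ => rfl)

lemma filter_inr (E : Finset (Sym2 V)) (u : V) (hu : s(u, u) ∈ E) :
    (liftEdges E).filter (fun e => Sum.inr u ∈ e) = {s(Sum.inl u, Sum.inr u)} := by
  rw [filter_lift]
  have h1 : E.filter (fun e => Sum.inr u ∈ f2 e) = {s(u, u)} := by
    ext e
    simp only [mem_filter, inr_mem_f2, Finset.mem_singleton]
    exact ⟨fun h => h.2, fun h => ⟨h ▸ hu, h⟩⟩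
  rw [h1, Finset.image_singleton, f2_diag]

lemma liftPath_head (v : V) (l : List V) : ∃ t, liftPath (v :: l) = Sum.inl v :: t := by
  cases l with
  | nil => exact ⟨[], rfl⟩
  | cons w l =>
    by_cases h : v = w
    · exact ⟨Sum.inr v :: liftPath (w :: l), by simp [liftPath, h]⟩
    · exact ⟨liftPath (w :: l), by simp [liftPath, h]⟩

lemma f2_mem_liftEdges {E : Finset (Sym2 V)} {e : Sym2 V} (he : e ∈ E) :
    f2 e ∈ liftEdges E := by
  rw [liftEdges_eq]; exact Finset.mem_image_of_mem _ he

lemma liftPath_chain (E : Finset (Sym2 V)) :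
    ∀ p : List V, List.Chain' (fun u v => s(u, v) ∈ E) p →
      List.Chain' (fun a b => s(a, b) ∈ liftEdges E) (liftPath p)
  | [], _ => by simp [liftPath, List.Chain']
  | [v], _ => by simp [liftPath, List.Chain']
  | u :: v :: rest, h => by
    rw [List.Chain', List.isChain_cons_cons] at h
    have ih := liftPath_chain E (v :: rest) h.2
    obtain ⟨t, ht⟩ := liftPath_head v rest
    by_cases hc : u = v
    · subst hc
      have hpend : s(Sum.inl u, Sum.inr u) ∈ liftEdges E := by
        have := f2_mem_liftEdges h.1
        rwa [f2_diag] at this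
      simp only [liftPath, if_pos rfl, ht] at *
      refine List.isChain_cons_cons.mpr ⟨hpend, List.isChain_cons_cons.mpr ⟨?_, ih⟩⟩
      rwa [Sym2.eq_swap]
    · have hed : s(Sum.inl u, Sum.inl v) ∈ liftEdges E := by
        have := f2_mem_liftEdges h.1
        rwa [f2_nondiag hc] at this
      simp only [liftPath, if_neg hc, ht] at *
      exact List.isChain_cons_cons.mpr ⟨hed, ih⟩

lemma errwList_congr {W : Type*} [Fintype W] [DecidableEq W] (E : Finset (Sym2 W)) :
    ∀ (q : List W) (w₁ w₂ : Sym2 W → ℝ), (∀ e ∈ E, w₁ e = w₂ e) →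
      List.Chain' (fun a b => s(a, b) ∈ E) q → errwList E w₁ q = errwList E w₂ q
  | [], _, _, _, _ => rfl
  | [_], _, _, _, _ => rfl
  | u :: v :: rest, w₁, w₂, h, hq => by
    rw [List.Chain', List.isChain_cons_cons] at hq
    rw [errwList, errwList]
    have hnum : w₁ s(u, v) = w₂ s(u, v) := h _ hq.1
    have hden : ∑ e ∈ E.filter (fun e => u ∈ e), w₁ e
        = ∑ e ∈ E.filter (fun e => u ∈ e), w₂ e :=
      Finset.sum_congr rfl (fun e he => h e (Finset.mem_filter.mp he).1)
    have hrec := errwList_congr E (v :: rest)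
      (fun e => if e = s(u, v) then w₁ e + (if e.IsDiag then 2 else 1) else w₁ e)
      (fun e => if e = s(u, v) then w₂ e + (if e.IsDiag then 2 else 1) else w₂ e)
      (fun e he => by by_cases hh : e = s(u, v) <;> simp [hh, hnum, h e he]) hq.2
    rw [hnum, hden, hrec]

lemma errw_main (E : Finset (Sym2 V)) :
    ∀ (p : List V) (w : Sym2 V → ℝ), (∀ e ∈ E, 0 < w e) →
      List.Chain' (fun u v => s(u, v) ∈ E) p →
      errwList E w p = errwList (liftEdges E) (liftWeight w) (liftPath p)
  | [], _, _, _ => rfl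
  | [_], _, _, _ => rfl
  | u :: v :: rest, w, hw, hp => by
    rw [List.Chain', List.isChain_cons_cons] at hp
    obtain ⟨huv, hp'⟩ := hp
    have hS : ∑ e ∈ (liftEdges E).filter (fun e => Sum.inl u ∈ e), liftWeight w e
        = ∑ e ∈ E.filter (fun e => u ∈ e), w e := by
      rw [sum_filter_inl]
      exact Finset.sum_congr rfl fun e _ => liftWeight_f2 w e
    by_cases hc : u = v
    · -- loop case
      subst hc
      set wG : Sym2 V → ℝ :=
        fun e => if e = s(u, u) then w e + (if e.IsDiag then 2 else 1) else w e with hwG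
      have hwGdef : ∀ e, wG e = if e = s(u, u) then w e + 2 else w e := by
        intro e
        by_cases h : e = s(u, u) <;> simp [hwG, h]
      have hwGpos : ∀ e ∈ E, 0 < wG e := by
        intro e he
        rw [hwGdef]
        by_cases h : e = s(u, u) <;> simp [h] <;> [linarith [hw _ huv]; exact hw e he]
      obtain ⟨t, ht⟩ := liftPath_head u rest
      have hlift : liftPath (u :: u :: rest) = Sum.inl u :: Sum.inr u :: Sum.inl u :: t := by
        simp [liftPath, ht]
      rw [hlift, errwList, errwList]
      set W₁ : Sym2 (V ⊕ V) → ℝ := fun e =>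
        if e = s(Sum.inl u, Sum.inr u) then
          liftWeight w e + (if e.IsDiag then 2 else 1) else liftWeight w e with hW₁
      have hpendnd : ¬ (s(Sum.inl u, Sum.inr u) : Sym2 (V ⊕ V)).IsDiag := by
        simp [Sym2.mk_isDiag_iff]
      have hswap : s(Sum.inr u, Sum.inl u) = s(Sum.inl u, Sum.inr u) := Sym2.eq_swap
      have hWpend : liftWeight w s(Sum.inl u, Sum.inr u) = w s(u, u) := by
        rw [← f2_diag, liftWeight_f2]
      have hW₁pend : W₁ s(Sum.inr u, Sum.inl u) = w s(u, u) + 1 := by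
        rw [hW₁]; simp only [hswap, if_pos rfl, hpendnd, if_false, hWpend]; simp
      have hS'' : ∑ e ∈ (liftEdges E).filter (fun e => Sum.inr u ∈ e), W₁ e
          = w s(u, u) + 1 := by
        rw [filter_inr E u huv, Finset.sum_singleton, ← hswap, hW₁pend]
      rw [errwList]
      set W₂ : Sym2 (V ⊕ V) → ℝ := fun e =>
        if e = s(Sum.inr u, Sum.inl u) then W₁ e + (if e.IsDiag then 2 else 1) else W₁ e
        with hW₂
      have hagree : ∀ e' ∈ liftEdges E, W₂ e' = liftWeight wG e' := by
        rw [liftEdges_eq]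
        intro e' he'
        obtain ⟨e, he, rfl⟩ := Finset.mem_image.mp he'
        rw [liftWeight_f2]
        by_cases h : e = s(u, u)
        · subst h
          rw [hW₂, hW₁]
          simp only [f2_diag, hswap, if_pos rfl, hpendnd, if_false, hWpend, hwGdef,
            if_pos rfl]
          simp; ring
        · have hne : f2 e ≠ s(Sum.inl u, Sum.inr u) := by
            rw [← f2_diag]
            exact fun hh => h (f2_inj hh)
          rw [hW₂, hW₁]
          simp only [hswap, if_neg hne, hwGdef, if_neg h]
          exact liftWeight_f2 w e
      have hchain' : List.Chain' (fun a b => s(a, b) ∈ liftEdges E) (Sum.inl u :: t) := by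
        rw [← ht]; exact liftPath_chain E (u :: rest) hp'
      have hcongr := errwList_congr (liftEdges E) (Sum.inl u :: t) W₂ (liftWeight wG)
        hagree hchain'
      have hIH := errw_main E (u :: rest) wG hwGpos hp'
      rw [hcongr, ← ht, ← hIH, hW₁pend, hS'', hS, hWpend]
      have hpos : w s(u, u) + 1 ≠ 0 := by have := hw _ huv; linarith
      rw [div_self hpos]
      ring
    · -- non-loop case
      set wG : Sym2 V → ℝ :=
        fun e => if e = s(u, v) then w e + (if e.IsDiag then 2 else 1) else w e with hwG
      have hnd : ¬ (s(u, v) : Sym2 V).IsDiag := by simp [Sym2.mk_isDiag_iff, hc]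
      have hwGdef : ∀ e, wG e = if e = s(u, v) then w e + 1 else w e := by
        intro e
        by_cases h : e = s(u, v) <;> simp [hwG, h, hnd]
      have hwGpos : ∀ e ∈ E, 0 < wG e := by
        intro e he
        rw [hwGdef]
        by_cases h : e = s(u, v) <;> simp [h] <;> [linarith [hw _ huv]; exact hw e he]
      obtain ⟨t, ht⟩ := liftPath_head v rest
      have hlift : liftPath (u :: v :: rest) = Sum.inl u :: Sum.inl v :: t := by
        simp [liftPath, hc, ht]
      rw [hlift, errwList, errwList]
      set W₁ : Sym2 (V ⊕ V) → ℝ := fun e =>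
        if e = s(Sum.inl u, Sum.inl v) then
          liftWeight w e + (if e.IsDiag then 2 else 1) else liftWeight w e with hW₁
      have hWuv : liftWeight w s(Sum.inl u, Sum.inl v) = w s(u, v) := by
        rw [← f2_nondiag hc, liftWeight_f2]
      have hagree : ∀ e' ∈ liftEdges E, W₁ e' = liftWeight wG e' := by
        rw [liftEdges_eq]
        intro e' he'
        obtain ⟨e, he, rfl⟩ := Finset.mem_image.mp he'
        rw [liftWeight_f2]
        by_cases h : e = s(u, v)
        · subst h
          rw [hW₁]
          have : ¬ (s(Sum.inl u, Sum.inl v) : Sym2 (V ⊕ V)).IsDiag := by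
            simp [Sym2.mk_isDiag_iff, hc]
          simp only [f2_nondiag hc, if_pos rfl, this, if_false, hWuv, hwGdef, if_pos rfl]
        · have hne : f2 e ≠ s(Sum.inl u, Sum.inl v) := by
            rw [← f2_nondiag hc]
            exact fun hh => h (f2_inj hh)
          rw [hW₁]
          simp only [if_neg hne, hwGdef, if_neg h]
          exact liftWeight_f2 w e
      have hchain' : List.Chain' (fun a b => s(a, b) ∈ liftEdges E) (Sum.inl v :: t) := by
        rw [← ht]; exact liftPath_chain E (v :: rest) hp'
      have hcongr := errwList_congr (liftEdges E) (Sum.inl v :: t) W₁ (liftWeight wG)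
        hagree hchain'
      have hIH := errw_main E (v :: rest) wG hwGpos hp'
      rw [hcongr, ← ht, ← hIH, hS, hWuv]

/-- replacing each loop by a pendant edge (with the same initial weight)
preserves the law of the edge-reinforced random walk: for every admissible path `p` in
`G`, the probability that the reinforced walk on `G` traverses `p` equals the probability
that the reinforced walk on `G'` traverses the image path `p'`. -/
theorem errw_loop_replacement (E : Finset (Sym2 V)) (a : Sym2 V → ℝ)
    (ha : ∀ e ∈ E, 0 < a e) (p : List V)
    (hp : List.Chain' (fun u v => s(u, v) ∈ E) p) :
    errwList E a p = errwList (liftEdges E) (liftWeight a) (liftPath p) :=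
  errw_main E p a ha hp

end Rev15
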